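/- Let f : ℝ → ℝ be continuous with |f(x)| ≤ a·cosh(b·x) for all x (a > 0, b ∈ ℝ), fix λ > 0 and x ∈ ℝ, and for a probability measure ρ on ℝ define the probability measure Σ_x^f(ρ) = Σ_{n=0}^∞ (e^{−λ} λ^n / n!) · (h_{n+1})_*(δ_x ∗ ρ^{∗n}), where h_k(y) = f(y)/k and (h_k)_* is the pushforward. Then ρ ↦ Σ_x^f(ρ) is sequentially continuous: if ∫ φ dρ_n → ∫ φ dρ for every continuous compactly supported φ : ℝ → ℝ, then ∫ φ dΣ_x^f(ρ_n) → ∫ φ dΣ_x^f(ρ) for every continuous compactly supported φ. The same holds for Σ^f(ρ) = Σ_{n=0}^∞ (e^{−λ} λ^n / n!) · (h_{n+1})_*(ρ^{∗(n+1)}). -/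

import Mathlib

open MeasureTheory Filter Metric Set
open scoped ENNReal BoundedContinuousFunction Topology

/-- The `n`-fold convolution power of a measure on `ℝ`, with `ρ^{∗0} = δ₀`. -/
noncomputable def convPow (ρ : Measure ℝ) : ℕ → Measure ℝ
  | 0 => Measure.dirac 0
  | n + 1 => (convPow ρ n).conv ρ

/-- `Σ_x^f(ρ) = Σ_n (e^{−λ}λ^n/n!)·(h_{n+1})_*(δ_x ∗ ρ^{∗n})` with `h_k(y) = f(y)/k`. -/
noncomputable def sigmaX (f : ℝ → ℝ) (l x : ℝ) (ρ : Measure ℝ) : Measure ℝ :=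
  Measure.sum (fun n : ℕ =>
    ENNReal.ofReal (Real.exp (-l) * l ^ n / n.factorial) •
      ((Measure.dirac x).conv (convPow ρ n)).map (fun y => f y / ((n : ℝ) + 1)))

/-- `Σ^f(ρ) = Σ_n (e^{−λ}λ^n/n!)·(h_{n+1})_*(ρ^{∗(n+1)})` with `h_k(y) = f(y)/k`. -/
noncomputable def sigmaTot (f : ℝ → ℝ) (l : ℝ) (ρ : Measure ℝ) : Measure ℝ :=
  Measure.sum (fun n : ℕ =>
    ENNReal.ofReal (Real.exp (-l) * l ^ n / n.factorial) •
      (convPow ρ (n + 1)).map (fun y => f y / ((n : ℝ) + 1)))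


/-- Vague convergence: convergence of the integrals against every continuous
compactly supported test function. -/
def VagueTendsto (ρs : ℕ → Measure ℝ) (ρ : Measure ℝ) : Prop :=
  ∀ φ : ℝ → ℝ, Continuous φ → HasCompactSupport φ →
    Tendsto (fun n => ∫ x, φ x ∂(ρs n)) atTop (nhds (∫ x, φ x ∂ρ))


section Aux

lemma thick_preimage (v : ℝ) (t : ℝ) (B : Set ℝ) :
    (fun y => v + y) ⁻¹' (thickening t B) = thickening t ((fun y => v + y) ⁻¹' B) := by
  ext u
  simp only [mem_preimage, mem_thickening_iff, Real.dist_eq]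
  constructor
  · rintro ⟨z, hz, hd⟩
    exact ⟨z - v, by simpa using hz, by rw [show u - (z - v) = v + u - z by ring]; exact hd⟩
  · rintro ⟨z, hz, hd⟩
    exact ⟨v + z, hz, by rw [show v + u - (v + z) = u - z by ring]; exact hd⟩

lemma conv_apply'' (μ κ : Measure ℝ) [SFinite μ] [SFinite κ] {B : Set ℝ}
    (hB : MeasurableSet B) :
    (μ.conv κ) B = ∫⁻ v, μ ((fun y => v + y) ⁻¹' B) ∂κ := by
  rw [Measure.conv_comm]
  rw [Measure.conv, Measure.map_apply (by fun_prop) hB, Measure.prod_apply (by exact measurable_add hB)]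
  rfl

lemma lp_conv_right_aux (μ ν κ : Measure ℝ) [IsProbabilityMeasure μ] [IsProbabilityMeasure ν]
    [IsProbabilityMeasure κ] {ε : ℝ≥0∞} (hlt : levyProkhorovEDist μ ν < ε) {B : Set ℝ}
    (hB : MeasurableSet B) :
    (μ.conv κ) B ≤ (ν.conv κ) (thickening ε.toReal B) + ε := by
  rw [conv_apply'' μ κ hB, conv_apply'' ν κ (isOpen_thickening.measurableSet)]
  calc ∫⁻ v, μ ((fun y => v + y) ⁻¹' B) ∂κ
      ≤ ∫⁻ v, (ν ((fun y => v + y) ⁻¹' thickening ε.toReal B) + ε) ∂κ := by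
        apply lintegral_mono
        intro v
        simp only
        rw [thick_preimage]
        exact left_measure_le_of_levyProkhorovEDist_lt hlt (by exact (measurable_const_add v) hB)
    _ = ∫⁻ v, ν ((fun y => v + y) ⁻¹' thickening ε.toReal B) ∂κ + ε := by
        rw [lintegral_add_right _ measurable_const, lintegral_const, measure_univ, mul_one]

lemma lp_conv_right (μ ν κ : Measure ℝ) [IsProbabilityMeasure μ] [IsProbabilityMeasure ν]
    [IsProbabilityMeasure κ] :
    levyProkhorovEDist (μ.conv κ) (ν.conv κ) ≤ levyProkhorovEDist μ ν := by
  apply levyProkhorovEDist_le_of_forall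
  intro ε B hε hεtop hB
  refine ⟨lp_conv_right_aux μ ν κ hε hB, lp_conv_right_aux ν μ κ (by rwa [levyProkhorovEDist_comm]) hB⟩

lemma lp_conv_left (μ ν κ : Measure ℝ) [IsProbabilityMeasure μ] [IsProbabilityMeasure ν]
    [IsProbabilityMeasure κ] :
    levyProkhorovEDist (κ.conv μ) (κ.conv ν) ≤ levyProkhorovEDist μ ν := by
  rw [Measure.conv_comm, Measure.conv_comm κ ν]; exact lp_conv_right μ ν κ

lemma lp_conv_both (μ ν μ' ν' : Measure ℝ) [IsProbabilityMeasure μ] [IsProbabilityMeasure ν]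
    [IsProbabilityMeasure μ'] [IsProbabilityMeasure ν'] :
    levyProkhorovEDist (μ.conv ν) (μ'.conv ν') ≤
      levyProkhorovEDist μ μ' + levyProkhorovEDist ν ν' :=
  (levyProkhorovEDist_triangle _ (μ'.conv ν) _).trans
    (add_le_add (lp_conv_right μ μ' ν) (lp_conv_left ν ν' μ'))


/-- explicit cutoff -/
noncomputable def cutoff (R : ℝ) (x : ℝ) : ℝ := max 0 (min 1 (R + 1 - |x|))

lemma cutoff_cont (R : ℝ) : Continuous (cutoff R) := by
  unfold cutoff; fun_prop

lemma cutoff_nonneg (R x : ℝ) : 0 ≤ cutoff R x := le_max_left _ _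

lemma cutoff_le_one (R x : ℝ) : cutoff R x ≤ 1 := by
  unfold cutoff
  rcases le_or_gt (min 1 (R + 1 - |x|)) 0 with h | h
  · simpa [max_eq_left h] using zero_le_one
  · rw [max_eq_right h.le]; exact min_le_left _ _

lemma cutoff_eq_one (R x : ℝ) (hx : |x| ≤ R) : cutoff R x = 1 := by
  unfold cutoff
  rw [min_eq_left (by linarith), max_eq_right (by linarith)]

lemma cutoff_compactSupport (R : ℝ) : HasCompactSupport (cutoff R) := by
  apply HasCompactSupport.intro (isCompact_Icc (a := -(R+1)) (b := R+1))
  intro x hx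
  simp only [mem_Icc, not_and_or, not_le] at hx
  have : R + 1 - |x| ≤ 0 := by
    rcases hx with h | h <;> rcases abs_cases x with hc | hc <;> linarith [hc.1, hc.2]
  unfold cutoff
  rw [min_eq_right (by linarith), max_eq_left (by linarith)]

lemma exists_cutoff_big (ρ : Measure ℝ) [IsProbabilityMeasure ρ] {δ : ℝ} (hδ : 0 < δ) :
    ∃ R : ℝ, 1 - δ < ∫ x, cutoff R x ∂ρ := by
  have hmono : Monotone (fun n : ℕ => Icc (-(n:ℝ)) (n:ℝ)) := by
    intro m n hmn
    apply Icc_subset_Icc <;> · simp only [neg_le_neg_iff, Nat.cast_le]; exact_mod_cast hmn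
  have hunion : ⋃ n : ℕ, Icc (-(n:ℝ)) (n:ℝ) = univ := by
    ext y; simp only [mem_iUnion, mem_Icc, mem_univ, iff_true]
    obtain ⟨n, hn⟩ := exists_nat_ge |y|
    exact ⟨n, by rcases abs_cases y with h | h <;> constructor <;> linarith [h.1, h.2]⟩
  have htends : Tendsto (fun n : ℕ => ρ (Icc (-(n:ℝ)) (n:ℝ))) atTop (𝓝 (ρ univ)) := by
    rw [← hunion]
    exact tendsto_measure_iUnion_atTop hmono
  rw [measure_univ] at htends
  have htends' : Tendsto (fun n : ℕ => (ρ (Icc (-(n:ℝ)) (n:ℝ))).toReal) atTop (𝓝 1) := by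
    have := (ENNReal.tendsto_toReal (by norm_num)).comp htends
    simpa [Function.comp_def] using this
  have hev : ∀ᶠ n : ℕ in atTop, 1 - δ < (ρ (Icc (-(n:ℝ)) (n:ℝ))).toReal :=
    htends' (Ioi_mem_nhds (by linarith))
  obtain ⟨n, hn⟩ := hev.exists
  refine ⟨n, lt_of_lt_of_le hn ?_⟩
  have h1 : (ρ (Icc (-(n:ℝ)) (n:ℝ))).toReal = ∫ x in Icc (-(n:ℝ)) (n:ℝ), (1:ℝ) ∂ρ := by
    rw [setIntegral_const]; simp [Measure.real_def]
  have h2 : ∫ x in Icc (-(n:ℝ)) (n:ℝ), (1:ℝ) ∂ρ = ∫ x in Icc (-(n:ℝ)) (n:ℝ), cutoff n x ∂ρ := by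
    apply setIntegral_congr_fun measurableSet_Icc
    intro y hy
    rw [mem_Icc] at hy
    exact (cutoff_eq_one n y (abs_le.mpr ⟨hy.1, hy.2⟩)).symm
  rw [h1, h2]
  apply setIntegral_le_integral
  · exact ((cutoff_cont n).integrable_of_hasCompactSupport (cutoff_compactSupport n))
  · exact Eventually.of_forall fun y => cutoff_nonneg n y

lemma abs_integral_cut (μ : Measure ℝ) [IsProbabilityMeasure μ] (g : ℝ →ᵇ ℝ) (R : ℝ) :
    |∫ x, g x ∂μ - ∫ x, g x * cutoff R x ∂μ| ≤ ‖g‖ * (1 - ∫ x, cutoff R x ∂μ) := by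
  have hgint : Integrable (fun x => (g x : ℝ)) μ := g.integrable μ
  have hgχ : Integrable (fun x => g x * cutoff R x) μ :=
    (g.continuous.mul (cutoff_cont R)).integrable_of_hasCompactSupport
      ((cutoff_compactSupport R).mul_left)
  have hχint : Integrable (cutoff R) μ :=
    (cutoff_cont R).integrable_of_hasCompactSupport (cutoff_compactSupport R)
  rw [← integral_sub hgint hgχ]
  have key : |∫ x, (g x - g x * cutoff R x) ∂μ| ≤ ∫ x, ‖g‖ * (1 - cutoff R x) ∂μ := by
    have h1 : |∫ x, (g x - g x * cutoff R x) ∂μ| ≤ ∫ x, |g x - g x * cutoff R x| ∂μ := by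
      have := norm_integral_le_integral_norm (μ := μ) (fun x => g x - g x * cutoff R x)
      simpa [Real.norm_eq_abs] using this
    refine h1.trans (integral_mono ((hgint.sub hgχ).abs)
      (((integrable_const (1:ℝ)).sub hχint).const_mul ‖g‖) fun y => ?_)
    have h0 : |g y - g y * cutoff R y| = |g y| * (1 - cutoff R y) := by
      rw [show g y - g y * cutoff R y = g y * (1 - cutoff R y) by ring]
      rw [abs_mul, abs_of_nonneg (show (0:ℝ) ≤ 1 - cutoff R y by linarith [cutoff_le_one R y])]
    rw [h0]
    exact mul_le_mul_of_nonneg_right (g.norm_coe_le_norm y)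
      (by linarith [cutoff_le_one R y])
  refine key.trans (le_of_eq ?_)
  rw [integral_const_mul, integral_sub (integrable_const 1) hχint]
  simp

lemma weak_of_vague (ρ : Measure ℝ) (ρs : ℕ → Measure ℝ) [IsProbabilityMeasure ρ]
    (hρs : ∀ n, IsProbabilityMeasure (ρs n)) (hconv : VagueTendsto ρs ρ)
    (g : ℝ →ᵇ ℝ) :
    Tendsto (fun k => ∫ x, g x ∂(ρs k)) atTop (𝓝 (∫ x, g x ∂ρ)) := by
  rw [Metric.tendsto_atTop]
  intro ε hε
  haveI := fun n => hρs n
  set M := ‖g‖ with hM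
  have hM0 : 0 ≤ M := norm_nonneg g
  set δ : ℝ := ε / (3 * M + 2) with hδdef
  have hδ : 0 < δ := div_pos hε (by linarith)
  obtain ⟨R, hR⟩ := exists_cutoff_big ρ hδ
  have T1 : Tendsto (fun k => ∫ x, g x * cutoff R x ∂(ρs k)) atTop
      (𝓝 (∫ x, g x * cutoff R x ∂ρ)) :=
    hconv _ (g.continuous.mul (cutoff_cont R)) ((cutoff_compactSupport R).mul_left)
  have T2 : Tendsto (fun k => ∫ x, cutoff R x ∂(ρs k)) atTop
      (𝓝 (∫ x, cutoff R x ∂ρ)) :=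
    hconv _ (cutoff_cont R) (cutoff_compactSupport R)
  have hev1 : ∀ᶠ k in atTop, |∫ x, g x * cutoff R x ∂(ρs k) - ∫ x, g x * cutoff R x ∂ρ| < δ := by
    have := T1 (Metric.ball_mem_nhds _ hδ)
    filter_upwards [this] with k hk
    simpa [Real.dist_eq] using hk
  have hev2 : ∀ᶠ k in atTop, 1 - 2*δ < ∫ x, cutoff R x ∂(ρs k) := by
    have h2 : Ioi (1 - 2*δ) ∈ 𝓝 (∫ x, cutoff R x ∂ρ) := Ioi_mem_nhds (by linarith)
    filter_upwards [T2 h2] with k hk using hk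
  rw [eventually_atTop] at hev1 hev2
  obtain ⟨N1, h1⟩ := hev1
  obtain ⟨N2, h2⟩ := hev2
  refine ⟨max N1 N2, fun k hk => ?_⟩
  have hk1 := h1 k (le_trans (le_max_left _ _) hk)
  have hk2 := h2 k (le_trans (le_max_right _ _) hk)
  have b1 := abs_integral_cut (ρs k) g R
  have b2 := abs_integral_cut ρ g R
  have hχρ_le : ∫ x, cutoff R x ∂ρ ≤ 1 := by
    calc ∫ x, cutoff R x ∂ρ ≤ ∫ x, (1:ℝ) ∂ρ := by
          apply integral_mono ((cutoff_cont R).integrable_of_hasCompactSupport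
            (cutoff_compactSupport R)) (integrable_const 1) fun y => cutoff_le_one R y
      _ = 1 := by simp
  have hχρs_le : ∫ x, cutoff R x ∂(ρs k) ≤ 1 := by
    calc ∫ x, cutoff R x ∂(ρs k) ≤ ∫ x, (1:ℝ) ∂(ρs k) := by
          apply integral_mono ((cutoff_cont R).integrable_of_hasCompactSupport
            (cutoff_compactSupport R)) (integrable_const 1) fun y => cutoff_le_one R y
      _ = 1 := by simp
  rw [Real.dist_eq]
  have : |∫ x, g x ∂(ρs k) - ∫ x, g x ∂ρ| ≤
      |∫ x, g x ∂(ρs k) - ∫ x, g x * cutoff R x ∂(ρs k)|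
      + |∫ x, g x * cutoff R x ∂(ρs k) - ∫ x, g x * cutoff R x ∂ρ|
      + |∫ x, g x * cutoff R x ∂ρ - ∫ x, g x ∂ρ| := by
    have := abs_sub_le (∫ x, g x ∂(ρs k)) (∫ x, g x * cutoff R x ∂ρ) (∫ x, g x ∂ρ)
    have h' := abs_sub_le (∫ x, g x ∂(ρs k)) (∫ x, g x * cutoff R x ∂(ρs k))
      (∫ x, g x * cutoff R x ∂ρ)
    linarith
  have hb2' : |∫ x, g x * cutoff R x ∂ρ - ∫ x, g x ∂ρ| ≤ M * (1 - ∫ x, cutoff R x ∂ρ) := by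
    rw [abs_sub_comm]; exact b2
  have hfinal : |∫ x, g x ∂(ρs k) - ∫ x, g x ∂ρ| ≤ M * (2*δ) + δ + M * δ := by
    have e1 : M * (1 - ∫ x, cutoff R x ∂(ρs k)) ≤ M * (2*δ) :=
      mul_le_mul_of_nonneg_left (by linarith) hM0
    have e2 : M * (1 - ∫ x, cutoff R x ∂ρ) ≤ M * δ :=
      mul_le_mul_of_nonneg_left (by linarith) hM0
    linarith [b1, hk1, hb2']
  have : M * (2*δ) + δ + M * δ < ε := by
    have hδε : δ * (3*M + 2) = ε := by
      rw [hδdef]; field_simp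
    nlinarith [hδ]
  linarith

lemma pm_tendsto_iff_lp (Ps : ℕ → ProbabilityMeasure ℝ) (P : ProbabilityMeasure ℝ) :
    Tendsto Ps atTop (𝓝 P) ↔
      Tendsto (fun k => levyProkhorovEDist (Ps k : Measure ℝ) (P : Measure ℝ)) atTop (𝓝 0) := by
  rw [(LevyProkhorov.probabilityMeasureHomeomorph (Ω := ℝ)).isEmbedding.tendsto_nhds_iff]
  rw [tendsto_iff_dist_tendsto_zero]
  have hd : ∀ k, dist ((LevyProkhorov.probabilityMeasureHomeomorph (Ω := ℝ) ∘ Ps) k)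
      (LevyProkhorov.probabilityMeasureHomeomorph (Ω := ℝ) P) =
      (levyProkhorovEDist (Ps k : Measure ℝ) (P : Measure ℝ)).toReal := fun k => by
    with_unfolding_all rfl
  simp only [hd]
  rw [← ENNReal.tendsto_toReal_iff (fun k => levyProkhorovEDist_ne_top _ _) (by norm_num)]
  simp


lemma convPow_prob (ρ : Measure ℝ) [IsProbabilityMeasure ρ] (n : ℕ) :
    IsProbabilityMeasure (convPow ρ n) := by
  induction n with
  | zero => rw [convPow]; infer_instance
  | succ n ih => rw [convPow]; exact @MeasureTheory.Measure.probabilitymeasure_of_probabilitymeasures_conv ℝ _ _ _ _ _ ih _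

lemma lp_convPow (ρ ρ' : Measure ℝ) [IsProbabilityMeasure ρ] [IsProbabilityMeasure ρ'] (n : ℕ) :
    levyProkhorovEDist (convPow ρ n) (convPow ρ' n) ≤ n * levyProkhorovEDist ρ ρ' := by
  induction n with
  | zero => simp [convPow, levyProkhorovEDist_self]
  | succ n ih =>
      haveI := convPow_prob ρ n
      haveI := convPow_prob ρ' n
      rw [convPow, convPow]
      calc levyProkhorovEDist ((convPow ρ n).conv ρ) ((convPow ρ' n).conv ρ')
          ≤ levyProkhorovEDist (convPow ρ n) (convPow ρ' n) + levyProkhorovEDist ρ ρ' :=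
            lp_conv_both _ _ _ _
        _ ≤ n * levyProkhorovEDist ρ ρ' + levyProkhorovEDist ρ ρ' := add_le_add_left ih _
        _ = (n + 1 : ℕ) * levyProkhorovEDist ρ ρ' := by push_cast; ring

lemma integral_sum_smul_map (φ : ℝ → ℝ) (hφ : Continuous φ) (hφs : HasCompactSupport φ)
    (r : ℕ → ℝ) (hr : ∀ n, 0 ≤ r n) (hrs : Summable r)
    (ms : ℕ → Measure ℝ) (hms : ∀ n, IsProbabilityMeasure (ms n))
    (g : ℕ → ℝ → ℝ) (hg : ∀ n, Continuous (g n)) :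
    ∫ y, φ y ∂(Measure.sum fun n => ENNReal.ofReal (r n) • (ms n).map (g n)) =
      ∑' n, r n * ∫ y, φ (g n y) ∂(ms n) := by
  haveI := hms
  have hmap : ∀ n, IsProbabilityMeasure ((ms n).map (g n)) := fun n =>
    Measure.isProbabilityMeasure_map (hg n).aemeasurable
  have hfin : IsFiniteMeasure (Measure.sum fun n => ENNReal.ofReal (r n) • (ms n).map (g n)) := by
    constructor
    rw [Measure.sum_apply _ MeasurableSet.univ]
    calc ∑' n, (ENNReal.ofReal (r n) • (ms n).map (g n)) univ
        = ∑' n, ENNReal.ofReal (r n) := by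
          apply tsum_congr; intro n
          simp [(hmap n).measure_univ]
      _ = ENNReal.ofReal (∑' n, r n) := (ENNReal.ofReal_tsum_of_nonneg hr hrs).symm
      _ < ⊤ := ENNReal.ofReal_lt_top
  have hint : Integrable φ (Measure.sum fun n => ENNReal.ofReal (r n) • (ms n).map (g n)) :=
    hφ.integrable_of_hasCompactSupport hφs
  rw [integral_sum_measure hint]
  apply tsum_congr; intro n
  rw [integral_smul_measure, integral_map (hg n).aemeasurable hφ.aestronglyMeasurable,
    ENNReal.toReal_ofReal (hr n)]
  simp [smul_eq_mul]

lemma sigma_like_tendsto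
    (φ : ℝ → ℝ) (hφ : Continuous φ) (hφs : HasCompactSupport φ)
    (r : ℕ → ℝ) (hr : ∀ n, 0 ≤ r n) (hrs : Summable r)
    (ms : ℕ → Measure ℝ) (msk : ℕ → ℕ → Measure ℝ)
    (hms : ∀ n, IsProbabilityMeasure (ms n)) (hmsk : ∀ k n, IsProbabilityMeasure (msk k n))
    (g : ℕ → ℝ → ℝ) (hg : ∀ n, Continuous (g n))
    (hLP : ∀ n, Tendsto (fun k => levyProkhorovEDist (msk k n) (ms n)) atTop (𝓝 0)) :
    Tendsto (fun k => ∫ y, φ y ∂(Measure.sum fun n => ENNReal.ofReal (r n) • (msk k n).map (g n)))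
      atTop (𝓝 (∫ y, φ y ∂(Measure.sum fun n => ENNReal.ofReal (r n) • (ms n).map (g n)))) := by
  obtain ⟨y0, hy0⟩ := (hφ.abs).exists_forall_ge_of_hasCompactSupport hφs.abs
  set C : ℝ := |φ y0| with hC
  have hC0 : 0 ≤ C := abs_nonneg _
  have key : ∀ k, ∫ y, φ y ∂(Measure.sum fun n => ENNReal.ofReal (r n) • (msk k n).map (g n)) =
      ∑' n, r n * ∫ y, φ (g n y) ∂(msk k n) := fun k =>
    integral_sum_smul_map φ hφ hφs r hr hrs _ (hmsk k) g hg
  simp only [key, integral_sum_smul_map φ hφ hφs r hr hrs ms hms g hg]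
  apply tendsto_tsum_of_dominated_convergence (bound := fun n => r n * C)
    (hrs.mul_right C)
  · intro n
    haveI := hms n
    haveI := fun k => hmsk k n
    apply Tendsto.const_mul
    set ψ : ℝ →ᵇ ℝ := BoundedContinuousFunction.ofNormedAddCommGroup (fun y => φ (g n y))
      (hφ.comp (hg n)) C (fun y => by simpa [Real.norm_eq_abs] using hy0 (g n y)) with hψ
    have hPM := (pm_tendsto_iff_lp (fun k => ⟨msk k n, hmsk k n⟩) ⟨ms n, hms n⟩).mpr (hLP n)
    have := ProbabilityMeasure.tendsto_iff_forall_integral_tendsto.mp hPM ψ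
    simpa [hψ] using this
  · apply Eventually.of_forall
    intro k n
    haveI := hmsk k n
    rw [Real.norm_eq_abs, abs_mul, abs_of_nonneg (hr n)]
    apply mul_le_mul_of_nonneg_left _ (hr n)
    have := norm_integral_le_of_norm_le_const (μ := msk k n)
      (f := fun y => φ (g n y)) (C := C)
      (Eventually.of_forall fun y => by simpa [Real.norm_eq_abs] using hy0 (g n y))
    simpa [Real.norm_eq_abs] using this


end Aux

theorem sigma_operators_sequentially_continuous
    (f : ℝ → ℝ) (hf : Continuous f)
    (a b : ℝ) (ha : 0 < a)
    (hbound : ∀ x, |f x| ≤ a * Real.cosh (b * x))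
    (l : ℝ) (hl : 0 < l) (x : ℝ)
    (ρ : Measure ℝ) (ρs : ℕ → Measure ℝ)
    (hρ : IsProbabilityMeasure ρ) (hρs : ∀ n, IsProbabilityMeasure (ρs n))
    (hconv : VagueTendsto ρs ρ) :
    VagueTendsto (fun n => sigmaX f l x (ρs n)) (sigmaX f l x ρ) ∧
    VagueTendsto (fun n => sigmaTot f l (ρs n)) (sigmaTot f l ρ) := by
  haveI := hρ
  haveI := fun n => hρs n
  have hweak := (ProbabilityMeasure.tendsto_iff_forall_integral_tendsto
    (μs := fun k => (⟨ρs k, hρs k⟩ : ProbabilityMeasure ℝ)) (μ := ⟨ρ, hρ⟩) (F := atTop)).mpr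
    (fun g => weak_of_vague ρ ρs hρs hconv g)
  have hek : Tendsto (fun k => levyProkhorovEDist (ρs k) ρ) atTop (𝓝 0) :=
    (pm_tendsto_iff_lp (fun k => ⟨ρs k, hρs k⟩) ⟨ρ, hρ⟩).mp hweak
  set r : ℕ → ℝ := fun n => Real.exp (-l) * l ^ n / n.factorial with hrdef
  have hr : ∀ n, 0 ≤ r n := fun n => by
    have h1 : (0:ℝ) < Real.exp (-l) := Real.exp_pos _
    have h2 : (0:ℝ) ≤ l ^ n := pow_nonneg hl.le n
    have h3 : (0:ℝ) < n.factorial := by exact_mod_cast n.factorial_pos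
    positivity
  have hrs : Summable r := by
    have := (Real.summable_pow_div_factorial l).mul_left (Real.exp (-l))
    simpa [hrdef, mul_div_assoc] using this
  constructor
  · intro φ hφc hφs
    have hms : ∀ n, IsProbabilityMeasure ((Measure.dirac x).conv (convPow ρ n)) := fun n => by
      haveI := convPow_prob ρ n; infer_instance
    have hmsk : ∀ k n, IsProbabilityMeasure ((Measure.dirac x).conv (convPow (ρs k) n)) :=
      fun k n => by haveI := convPow_prob (ρs k) n; infer_instance
    have hLP : ∀ n, Tendsto (fun k =>
        levyProkhorovEDist ((Measure.dirac x).conv (convPow (ρs k) n))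
          ((Measure.dirac x).conv (convPow ρ n))) atTop (𝓝 0) := by
      intro n
      have upper : ∀ k, levyProkhorovEDist ((Measure.dirac x).conv (convPow (ρs k) n))
          ((Measure.dirac x).conv (convPow ρ n))
            ≤ (n : ℝ≥0∞) * levyProkhorovEDist (ρs k) ρ := fun k => by
        haveI := convPow_prob ρ n; haveI := convPow_prob (ρs k) n
        exact (lp_conv_left _ _ _).trans (lp_convPow _ _ n)
      have h0 : Tendsto (fun k => (n:ℝ≥0∞) * levyProkhorovEDist (ρs k) ρ) atTop (𝓝 0) := by
        have := ENNReal.Tendsto.const_mul hek (Or.inr (by simp : (n:ℝ≥0∞) ≠ ⊤))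
        simpa using this
      exact tendsto_of_tendsto_of_tendsto_of_le_of_le tendsto_const_nhds h0
        (fun k => zero_le) upper
    have main := sigma_like_tendsto φ hφc hφs r hr hrs
      (fun n => (Measure.dirac x).conv (convPow ρ n))
      (fun k n => (Measure.dirac x).conv (convPow (ρs k) n))
      hms hmsk (fun n y => f y / ((n:ℝ)+1)) (fun n => hf.div_const _) hLP
    simpa only [sigmaX, hrdef] using main
  · intro φ hφc hφs
    have hms : ∀ n, IsProbabilityMeasure (convPow ρ (n+1)) := fun n => convPow_prob ρ (n+1)
    have hmsk : ∀ k n, IsProbabilityMeasure (convPow (ρs k) (n+1)) :=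
      fun k n => convPow_prob (ρs k) (n+1)
    have hLP : ∀ n, Tendsto (fun k =>
        levyProkhorovEDist (convPow (ρs k) (n+1)) (convPow ρ (n+1))) atTop (𝓝 0) := by
      intro n
      have upper : ∀ k, levyProkhorovEDist (convPow (ρs k) (n+1)) (convPow ρ (n+1))
            ≤ ((n+1 : ℕ) : ℝ≥0∞) * levyProkhorovEDist (ρs k) ρ := fun k =>
        lp_convPow _ _ (n+1)
      have h0 : Tendsto (fun k => ((n+1:ℕ):ℝ≥0∞) * levyProkhorovEDist (ρs k) ρ) atTop (𝓝 0) := by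
        have := ENNReal.Tendsto.const_mul hek (Or.inr (by simp : ((n+1:ℕ):ℝ≥0∞) ≠ ⊤))
        simpa using this
      exact tendsto_of_tendsto_of_tendsto_of_le_of_le tendsto_const_nhds h0
        (fun k => zero_le) upper
    have main := sigma_like_tendsto φ hφc hφs r hr hrs
      (fun n => convPow ρ (n+1)) (fun k n => convPow (ρs k) (n+1))
      hms hmsk (fun n y => f y / ((n:ℝ)+1)) (fun n => hf.div_const _) hLP
    simpa only [sigmaTot, hrdef] using main
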